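/- Under the bounds of Lemma 4.3, for every ε ∈ (0,1/6) there is a constant K > 0 (independent of m) such that for all m ∈ ℕ and t ∈ [0,T): if ‖X_s - v‖ ≤ m(T-s)^{1/2-ε} for all s ∈ [0,t] (i.e. t ≤ σ_m), then ψ(t) = exp(∫₀ᵗ G(s,X_s)ds) ≤ exp(Km³). Concretely: if |G(s,x)| ≤ C(1 + (T-s) + ‖x-v‖ + ‖x-v‖/(T-s) + ‖x-v‖²/(T-s) + ‖x-v‖³/(T-s)²) and ‖X_s - v‖ ≤ m(T-s)^{1/2-ε}, then ∫₀ᵗ |G(s,X_s)|ds ≤ Km³ with K depending only on C, T, ε. -/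
import Mathlib
set_option maxHeartbeats 1000000


open Matrix intervalIntegral

/-- Euclidean norm of a vector in `ℝ^d`. -/
noncomputable def enorm19 {d : ℕ} (y : Fin d → ℝ) : ℝ := Real.sqrt (y ⬝ᵥ y)

lemma aux19 {T t a : ℝ} (ht : 0 ≤ t) (htT : t ≤ T) (ha : (-1 : ℝ) < a) :
    IntervalIntegrable (fun s => (T - s) ^ a) MeasureTheory.volume 0 t ∧
      (∫ s in (0 : ℝ)..t, (T - s) ^ a) ≤ T ^ (a + 1) / (a + 1) := by
  constructor
  · have h := (intervalIntegrable_rpow' (a := T) (b := T - t) ha).comp_sub_left T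
    simpa using h
  · rw [intervalIntegral.integral_comp_sub_left (fun x => x ^ a) T]
    rw [integral_rpow (Or.inl ha)]
    have h1 : (0 : ℝ) < a + 1 := by linarith
    have h2 : (0 : ℝ) ≤ (T - t) ^ (a + 1) := Real.rpow_nonneg (by linarith) _
    rw [sub_zero]
    gcongr (?_ : ℝ) / _
    linarith

/-- Corollary 4.4: under the bound of Lemma 4.3 on `G`, for every
`ε ∈ (0,1/6)` there is `K > 0` (independent of `m`) such that whenever a path
`X` satisfies `‖X_s - v‖ ≤ m(T-s)^{1/2-ε}` for all `s ∈ [0,t]`, one has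
`∫₀ᵗ|G(s,X_s)|ds ≤ Km³`, and hence `ψ(t) = exp(∫₀ᵗ G(s,X_s)ds) ≤ exp(Km³)`. -/
theorem stmt_19 {d : ℕ} (T C ε : ℝ) (hT : 0 < T) (hC : 0 < C)
    (hε : ε ∈ Set.Ioo (0 : ℝ) (1 / 6)) (v : Fin d → ℝ)
    (G : ℝ → (Fin d → ℝ) → ℝ)
    (hG : ∀ s ∈ Set.Ico (0 : ℝ) T, ∀ x : Fin d → ℝ,
      |G s x| ≤ C * (1 + (T - s) + enorm19 (x - v)
        + enorm19 (x - v) / (T - s) + enorm19 (x - v) ^ 2 / (T - s)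
        + enorm19 (x - v) ^ 3 / (T - s) ^ 2)) :
    ∃ K > (0 : ℝ), ∀ m : ℕ, 1 ≤ m → ∀ t ∈ Set.Ico (0 : ℝ) T,
      ∀ X : ℝ → Fin d → ℝ, Continuous X →
      (∀ s ∈ Set.Icc (0 : ℝ) t, enorm19 (X s - v) ≤ m * (T - s) ^ ((1 : ℝ) / 2 - ε)) →
      (∫ s in (0 : ℝ)..t, |G s (X s)|) ≤ K * m ^ 3 ∧
      Real.exp (∫ s in (0 : ℝ)..t, G s (X s)) ≤ Real.exp (K * m ^ 3) := by
  obtain ⟨hε0, hε6⟩ := hε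
  -- exponents
  set e2 : ℝ := 1 / 2 - ε with he2
  set e3 : ℝ := -(1 / 2) - ε with he3
  set e4 : ℝ := -(2 * ε) with he4
  set e5 : ℝ := -(1 / 2) - 3 * ε with he5
  have ha0 : (-1 : ℝ) < 0 := by norm_num
  have ha1 : (-1 : ℝ) < 1 := by norm_num
  have ha2 : (-1 : ℝ) < e2 := by rw [he2]; linarith
  have ha3 : (-1 : ℝ) < e3 := by rw [he3]; linarith
  have ha4 : (-1 : ℝ) < e4 := by rw [he4]; linarith
  have ha5 : (-1 : ℝ) < e5 := by rw [he5]; linarith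
  set S : ℝ := T ^ ((0 : ℝ) + 1) / ((0 : ℝ) + 1) + T ^ ((1 : ℝ) + 1) / ((1 : ℝ) + 1)
      + T ^ (e2 + 1) / (e2 + 1) + T ^ (e3 + 1) / (e3 + 1)
      + T ^ (e4 + 1) / (e4 + 1) + T ^ (e5 + 1) / (e5 + 1) with hS
  have hSpos : 0 < S := by
    have h := fun (a : ℝ) (ha : (-1 : ℝ) < a) =>
      div_pos (Real.rpow_pos_of_pos hT (a + 1)) (by linarith : (0 : ℝ) < a + 1)
    have := h 0 ha0; have := h 1 ha1; have := h e2 ha2; have := h e3 ha3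
    have := h e4 ha4; have := h e5 ha5
    rw [hS]; positivity
  refine ⟨C * S, mul_pos hC hSpos, ?_⟩
  intro m hm t ht X hX hXb
  obtain ⟨ht0, htT⟩ := ht
  have hm1 : (1 : ℝ) ≤ (m : ℝ) := by exact_mod_cast hm
  set g : ℝ → ℝ := fun s => (T - s) ^ (0 : ℝ) + (T - s) ^ (1 : ℝ) + (T - s) ^ e2
      + (T - s) ^ e3 + (T - s) ^ e4 + (T - s) ^ e5 with hg
  -- pointwise bound
  have hptw : ∀ s ∈ Set.Icc (0 : ℝ) t, |G s (X s)| ≤ C * (m : ℝ) ^ 3 * g s := by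
    intro s hs
    have hsT : s < T := lt_of_le_of_lt hs.2 htT
    have hu : (0 : ℝ) < T - s := by linarith
    set u : ℝ := T - s with hudef
    set N : ℝ := enorm19 (X s - v) with hNdef
    have hN0 : 0 ≤ N := Real.sqrt_nonneg _
    have hNb : N ≤ (m : ℝ) * u ^ ((1 : ℝ) / 2 - ε) := hXb s hs
    set b : ℝ := u ^ ((1 : ℝ) / 2 - ε) with hbdef
    have hb0 : 0 ≤ b := Real.rpow_nonneg hu.le _
    have hb2 : u ^ ((1 : ℝ) - 2 * ε) = b ^ 2 := by
      rw [hbdef, ← Real.rpow_natCast (u ^ ((1 : ℝ) / 2 - ε)) 2, ← Real.rpow_mul hu.le]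
      congr 1; push_cast; ring
    have hb3 : u ^ ((3 : ℝ) / 2 - 3 * ε) = b ^ 3 := by
      rw [hbdef, ← Real.rpow_natCast (u ^ ((1 : ℝ) / 2 - ε)) 3, ← Real.rpow_mul hu.le]
      congr 1; push_cast; ring
    have hq0 : u ^ (0 : ℝ) = 1 := Real.rpow_zero u
    have hq1 : u ^ (1 : ℝ) = u := Real.rpow_one u
    have hq3 : u ^ e3 = b / u := by
      rw [show e3 = ((1 : ℝ) / 2 - ε) - 1 by rw [he3]; ring, Real.rpow_sub hu,
        Real.rpow_one, hbdef]
    have hq4 : u ^ e4 = b ^ 2 / u := by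
      rw [show e4 = ((1 : ℝ) - 2 * ε) - 1 by rw [he4]; ring, Real.rpow_sub hu,
        Real.rpow_one, hb2]
    have hq5 : u ^ e5 = b ^ 3 / u ^ 2 := by
      rw [show e5 = ((3 : ℝ) / 2 - 3 * ε) - 2 by rw [he5]; ring, Real.rpow_sub hu, hb3]
      norm_num [Real.rpow_two]
    have hm0 : (0 : ℝ) ≤ (m : ℝ) := by linarith
    have hMM : (m : ℝ) ≤ (m : ℝ) ^ 3 := by
      nlinarith [mul_nonneg (mul_nonneg hm0 (by linarith : (0:ℝ) ≤ (m:ℝ) - 1))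
        (by linarith : (0:ℝ) ≤ (m:ℝ) + 1)]
    have hM3 : (1 : ℝ) ≤ (m : ℝ) ^ 3 := le_trans hm1 hMM
    have hMM2 : (m : ℝ) ^ 2 ≤ (m : ℝ) ^ 3 := by
      nlinarith [mul_nonneg (mul_self_nonneg (m : ℝ)) (by linarith : (0:ℝ) ≤ (m:ℝ) - 1)]
    have t3 : N ≤ (m : ℝ) ^ 3 * b :=
      le_trans hNb (mul_le_mul_of_nonneg_right hMM hb0)
    have t4 : N / u ≤ (m : ℝ) ^ 3 * b / u := by gcongr
    have hN2 : N ^ 2 ≤ (m : ℝ) ^ 3 * b ^ 2 := by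
      have p2 := pow_le_pow_left₀ hN0 hNb 2
      have e2' : ((m : ℝ) * b) ^ 2 = (m : ℝ) ^ 2 * b ^ 2 := by ring
      have q2 : (m : ℝ) ^ 2 * b ^ 2 ≤ (m : ℝ) ^ 3 * b ^ 2 :=
        mul_le_mul_of_nonneg_right hMM2 (sq_nonneg b)
      linarith [p2, q2, e2'.le, e2'.ge]
    have hN3 : N ^ 3 ≤ (m : ℝ) ^ 3 * b ^ 3 := by
      have p3 := pow_le_pow_left₀ hN0 hNb 3
      have e3' : ((m : ℝ) * b) ^ 3 = (m : ℝ) ^ 3 * b ^ 3 := by ring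
      linarith [p3, e3'.le, e3'.ge]
    have t5 : N ^ 2 / u ≤ (m : ℝ) ^ 3 * b ^ 2 / u := by gcongr
    have t6 : N ^ 3 / u ^ 2 ≤ (m : ℝ) ^ 3 * b ^ 3 / u ^ 2 := by gcongr
    have hA : 1 + u + N + N / u + N ^ 2 / u + N ^ 3 / u ^ 2
        ≤ (m : ℝ) ^ 3 * (1 + u + b + b / u + b ^ 2 / u + b ^ 3 / u ^ 2) := by
      have e : (m : ℝ) ^ 3 * (1 + u + b + b / u + b ^ 2 / u + b ^ 3 / u ^ 2)
          = (m : ℝ) ^ 3 + (m : ℝ) ^ 3 * u + (m : ℝ) ^ 3 * b + (m : ℝ) ^ 3 * b / u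
            + (m : ℝ) ^ 3 * b ^ 2 / u + (m : ℝ) ^ 3 * b ^ 3 / u ^ 2 := by ring
      rw [e]
      have hu' : u ≤ (m : ℝ) ^ 3 * u := le_mul_of_one_le_left hu.le hM3
      exact add_le_add (add_le_add (add_le_add (add_le_add (add_le_add hM3 hu') t3) t4) t5) t6
    have hGb := hG s ⟨hs.1, hsT⟩ (X s)
    calc |G s (X s)| ≤ C * (1 + u + N + N / u + N ^ 2 / u + N ^ 3 / u ^ 2) := hGb
      _ ≤ C * ((m : ℝ) ^ 3 * (1 + u + b + b / u + b ^ 2 / u + b ^ 3 / u ^ 2)) :=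
          mul_le_mul_of_nonneg_left hA hC.le
      _ = C * (m : ℝ) ^ 3 * g s := by
          rw [hg]
          simp only [← hudef, hq0, hq1, hq3, hq4, hq5, hbdef]
          ring
  -- integrability and integral bound for g
  have i0 := aux19 (T := T) ht0 htT.le ha0
  have i1 := aux19 (T := T) ht0 htT.le ha1
  have i2 := aux19 (T := T) ht0 htT.le ha2
  have i3 := aux19 (T := T) ht0 htT.le ha3
  have i4 := aux19 (T := T) ht0 htT.le ha4
  have i5 := aux19 (T := T) ht0 htT.le ha5
  have hgint : IntervalIntegrable g MeasureTheory.volume 0 t := by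
    exact ((((i0.1.add i1.1).add i2.1).add i3.1).add i4.1).add i5.1
  have hgval : (∫ s in (0 : ℝ)..t, g s) ≤ S := by
    rw [hg, hS]
    rw [intervalIntegral.integral_add ((((i0.1.add i1.1).add i2.1).add i3.1).add i4.1) i5.1,
      intervalIntegral.integral_add (((i0.1.add i1.1).add i2.1).add i3.1) i4.1,
      intervalIntegral.integral_add ((i0.1.add i1.1).add i2.1) i3.1,
      intervalIntegral.integral_add (i0.1.add i1.1) i2.1,
      intervalIntegral.integral_add i0.1 i1.1]
    have := i0.2; have := i1.2; have := i2.2; have := i3.2; have := i4.2; have := i5.2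
    linarith
  have hFint : IntervalIntegrable (fun s => C * (m : ℝ) ^ 3 * g s) MeasureTheory.volume 0 t :=
    hgint.const_mul _
  have hFval : (∫ s in (0 : ℝ)..t, C * (m : ℝ) ^ 3 * g s) ≤ C * S * (m : ℝ) ^ 3 := by
    rw [intervalIntegral.integral_const_mul]
    have h1 : C * (m : ℝ) ^ 3 * (∫ s in (0 : ℝ)..t, g s) ≤ C * (m : ℝ) ^ 3 * S := by
      have : (0 : ℝ) ≤ C * (m : ℝ) ^ 3 := by positivity
      exact mul_le_mul_of_nonneg_left hgval this
    linarith [h1, (by ring : C * (m : ℝ) ^ 3 * S = C * S * (m : ℝ) ^ 3)]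
  have habs : (∫ s in (0 : ℝ)..t, |G s (X s)|) ≤ C * S * (m : ℝ) ^ 3 := by
    by_cases h : IntervalIntegrable (fun s => |G s (X s)|) MeasureTheory.volume 0 t
    · calc (∫ s in (0 : ℝ)..t, |G s (X s)|)
          ≤ ∫ s in (0 : ℝ)..t, C * (m : ℝ) ^ 3 * g s :=
            intervalIntegral.integral_mono_on ht0 h hFint hptw
        _ ≤ C * S * (m : ℝ) ^ 3 := hFval
    · rw [intervalIntegral.integral_undef h]
      positivity
  have habs' : (∫ s in (0 : ℝ)..t, |G s (X s)|) ≤ C * S * (m : ℕ) ^ 3 := by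
    push_cast
    exact habs
  refine ⟨habs', Real.exp_le_exp.mpr ?_⟩
  by_cases h : IntervalIntegrable (fun s => G s (X s)) MeasureTheory.volume 0 t
  · have h1 : |∫ s in (0 : ℝ)..t, G s (X s)| ≤ ∫ s in (0 : ℝ)..t, |G s (X s)| :=
      intervalIntegral.abs_integral_le_integral_abs ht0
    calc (∫ s in (0 : ℝ)..t, G s (X s)) ≤ |∫ s in (0 : ℝ)..t, G s (X s)| := le_abs_self _
      _ ≤ ∫ s in (0 : ℝ)..t, |G s (X s)| := h1
      _ ≤ C * S * (m : ℕ) ^ 3 := habs'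
  · rw [intervalIntegral.integral_undef h]
    positivity
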